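/- For all positive integers n and q, in the (q:1) Waiter-Client game on E(K_n) Waiter has a strategy to ensure that at the end of the game Client's graph contains a connected component with at least min{n, 2(n−q−1)} vertices. -/

import Mathlib

open SimpleGraph

/-- In the Waiter-Client game with bias `q`, set of free elements `F` and set `C` of elements
claimed so far by Client, Client has a strategy to ensure that the final set of elements
claimed by him satisfies `P`.  In every round Waiter offers `q + 1` free elements, Client
claims one of them and the remaining `q` go to Waiter; when fewer than `q + 1` free elements
remain, Waiter claims all of them and the game ends. -/
def ClientCanEnsure {α : Type*} [DecidableEq α] (q : ℕ) (P : Finset α → Prop)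
    (F C : Finset α) : Prop :=
  if F.card < q + 1 then P C
  else ∀ O ⊆ F, O.card = q + 1 → ∃ x ∈ O, ClientCanEnsure q P (F \ O) (insert x C)
  termination_by F.card
  decreasing_by
    have h1 : O.Nonempty := by rw [← Finset.card_pos]; omega
    have h2 := Finset.card_sdiff_add_card_eq_card ‹O ⊆ F›
    have h3 := Finset.card_le_card ‹O ⊆ F›
    have h4 := Finset.card_pos.mpr h1
    omega

/-- In the Waiter-Client game with bias `q`, set of free elements `F` and set `C` of elements
claimed so far by Client, Waiter has a strategy to ensure that the final set of elements
claimed by Client satisfies `P`.  In every round Waiter offers `q + 1` free elements, Client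
claims one of them and the remaining `q` go to Waiter; when fewer than `q + 1` free elements
remain, Waiter claims all of them and the game ends.  (The hypothesis `O ⊆ F` guarding the
recursive call is redundant; it is only there to justify termination.) -/
def WaiterCanForce {α : Type*} [DecidableEq α] (q : ℕ) (P : Finset α → Prop)
    (F C : Finset α) : Prop :=
  if F.card < q + 1 then P C
  else ∃ O ⊆ F, O.card = q + 1 ∧
    ∀ x ∈ O, O ⊆ F → WaiterCanForce q P (F \ O) (insert x C)
  termination_by F.card
  decreasing_by
    have h1 : O.Nonempty := ⟨x, ‹x ∈ O›⟩
    have h2 := Finset.card_sdiff_add_card_eq_card ‹O ⊆ F›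
    have h3 := Finset.card_le_card ‹O ⊆ F›
    have h4 := Finset.card_pos.mpr h1
    omega

/-- Client's graph: the simple graph on `V` whose edges are the elements claimed by Client. -/
def clientGraph {V : Type*} (C : Finset (Sym2 V)) : SimpleGraph V :=
  SimpleGraph.fromEdgeSet ↑C

/-- The board of the game played on `E(K_n)`: all non-loop edges of the complete graph `K_n`. -/
def knBoard (n : ℕ) : Finset (Sym2 (Fin n)) :=
  Finset.univ.filter fun e => ¬ e.IsDiag

theorem waiterCanForce_of_hereditary {α : Type*} [DecidableEq α] (q : ℕ) (P : Finset α → Prop)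
    (F C : Finset α) (h : ∀ C', C ⊆ C' → P C') : WaiterCanForce q P F C := by
  have key : ∀ k (F C : Finset α), F.card ≤ k → (∀ C', C ⊆ C' → P C') →
      WaiterCanForce q P F C := by
    intro k
    induction k with
    | zero =>
      intro F C hF h
      rw [WaiterCanForce]
      have : F.card < q + 1 := by omega
      rw [if_pos this]; exact h C subset_rfl
    | succ k ih =>
      intro F C hF h
      rw [WaiterCanForce]
      by_cases hc : F.card < q + 1
      · rw [if_pos hc]; exact h C subset_rfl
      · rw [if_neg hc]
        obtain ⟨O, hOF, hOcard⟩ := Finset.exists_subset_card_eq (show q + 1 ≤ F.card by omega)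
        refine ⟨O, hOF, hOcard, fun x hx _ => ih (F \ O) (insert x C) ?_ ?_⟩
        · have h2 := Finset.card_sdiff_of_subset hOF
          omega
        · intro C' hC'
          exact h C' (subset_trans (Finset.subset_insert x C) hC')
  exact key F.card F C le_rfl h


open Multiset in
inductive Sched (q t : ℕ) : ℕ → Multiset ℕ → Prop
  | done {s : ℕ} {D : Multiset ℕ} (h : t ≤ s) : Sched q t s D
  | stepA {s : ℕ} (T R : Multiset ℕ) (hsum : T.sum = q + 1) (h0 : (0:ℕ) ∉ T)
      (h : Sched q t (s + 1) (R.map (· + 1) + Multiset.replicate (Multiset.card T - 1) 1)) :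
      Sched q t s (T + R)
  | stepB {s : ℕ} (d : ℕ) (R : Multiset ℕ) (hd : q + 1 ≤ d)
      (h : Sched q t (s + 1) (R.map (· + 1))) :
      Sched q t s (d ::ₘ R)

lemma Sched.cast {q t s s' : ℕ} {D D' : Multiset ℕ} (h : Sched q t s D) (hs : s = s')
    (hD : D = D') : Sched q t s' D' := hs ▸ hD ▸ h

def L (a k : ℕ) : Multiset ℕ := (Multiset.range k).map (· + a)

lemma L_zero (a : ℕ) : L a 0 = 0 := rfl

lemma L_top (a k : ℕ) : L a (k + 1) = (a + k) ::ₘ L a k := by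
  simp [L, Multiset.range_succ, Nat.add_comm]

lemma L_bot (a k : ℕ) : L a (k + 1) = a ::ₘ L (a + 1) k := by
  induction k generalizing a with
  | zero => simp [L, Multiset.range_succ]
  | succ k ih =>
    rw [L_top, ih a, L_top, Multiset.cons_swap]
    congr 2
    omega

lemma L_map (a k : ℕ) : (L a k).map (· + 1) = L (a + 1) k := by
  simp only [L, Multiset.map_map]
  apply Multiset.map_congr rfl
  intro x _
  simp; omega

lemma rep_map (k v : ℕ) : (Multiset.replicate k v).map (· + 1) = Multiset.replicate k (v + 1) :=
  Multiset.map_replicate _ _ _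

section Phases
variable {q t m n e : ℕ}

/-- Regime 2 endgame. -/
lemma phase_end2 (he : e + m = q + 1) (ht : t ≤ 2 * m) :
    ∀ i j, i + j + 1 = m → Sched q t (m + j + 1) (Multiset.replicate e 1 + L (j + 2) i) := by
  intro i
  induction i with
  | zero => exact fun j hj => Sched.done (by omega)
  | succ i ih =>
    intro j hj
    have hkey : Multiset.replicate e 1 + L (j + 2) (i + 1)
        = (Multiset.replicate e 1 + {m}) + L (j + 2) i := by
      rw [L_top, show j + 2 + i = m by omega, add_assoc, Multiset.singleton_add]
    rw [hkey]
    refine Sched.stepA _ _ ?_ ?_ ?_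
    · simp [Multiset.sum_replicate]; omega
    · intro h0
      rcases Multiset.mem_add.1 h0 with h | h
      · exact absurd (Multiset.eq_of_mem_replicate h) (by omega)
      · rw [Multiset.mem_singleton] at h; omega
    · refine (ih (j+1) (by omega)).cast (by omega) ?_
      rw [L_map]
      have hc : Multiset.card (Multiset.replicate e 1 + {m}) - 1 = e := by
        simp [Multiset.card_replicate]
      rw [hc, show j + 1 + 2 = j + 2 + 1 by omega, add_comm]

/-- Regime 1 phase 4 (ladder exit). Needs `q + 1 ≤ m`. -/
lemma phase4 (hm : q + 1 ≤ m) (ht : t ≤ m + q + 1) :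
    ∀ i j, i + j = q → Sched q t (m + j) (L (m - i) (i + 1)) := by
  intro i
  induction i with
  | zero =>
    intro j hj
    have h1 : L (m - 0) 1 = m ::ₘ (0 : Multiset ℕ) := by
      rw [Nat.sub_zero]
      simpa [L_zero] using L_top m 0
    rw [h1]
    refine Sched.stepB m 0 (by omega) ?_
    simp only [Multiset.map_zero]
    exact Sched.done (by omega)
  | succ i ih =>
    intro j hj
    have htop : L (m - (i+1)) (i + 1 + 1) = m ::ₘ L (m - (i+1)) (i + 1) := by
      have := L_top (m - (i+1)) (i+1)
      rwa [show m - (i+1) + (i+1) = m by omega] at this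
    rw [htop]
    refine Sched.stepB m _ (by omega) ?_
    refine (ih (j+1) (by omega)).cast (by omega) ?_
    rw [L_map, show m - (i+1) + 1 = m - i by omega]

/-- Regime 1 phase 3 (absorbing fresh originals). Needs `q + 1 ≤ m`. -/
lemma phase3 (hq : 1 ≤ q) (hm : q + 1 ≤ m) (ht : t ≤ m + q + 1) :
    ∀ i r, r + i = m + 1 → q + 1 ≤ r →
      Sched q t r (L (r - q) q + Multiset.replicate i r) := by
  intro i
  induction i with
  | zero =>
    intro r hr hq'
    have hr' : r = m + 1 := by omega
    subst hr'
    simp only [Multiset.replicate_zero, add_zero]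
    refine (phase4 (q := q) (t := t) (m := m) hm ht (q - 1) 1 (by omega)).cast (by omega) ?_
    congr 1 <;> omega
  | succ i ih =>
    intro r hr hq'
    have hsplit : L (r - q) q + Multiset.replicate (i+1) r
        = r ::ₘ (L (r - q) q + Multiset.replicate i r) := by
      rw [Multiset.replicate_succ, ← Multiset.singleton_add, ← Multiset.singleton_add,
        add_left_comm]
    rw [hsplit]
    refine Sched.stepB r _ (by omega) ?_
    refine (ih (r+1) (by omega) (by omega)).cast rfl ?_
    rw [Multiset.map_add, L_map, rep_map, show r - q + 1 = r + 1 - q by omega]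

/-- The bridge: rounds `2..B`, given the state at round `B+1`. -/
lemma bridge (hm : 1 ≤ m) :
    ∀ i r, 2 ≤ r → r + i ≤ q + 1 → r + i ≤ m + 1 →
      Sched q t (r + i) (Multiset.replicate (q + 2 - (r+i)) 1 + L 2 (r + i - 2)
        + Multiset.replicate (m + 1 - (r+i)) (r+i)) →
      Sched q t r (Multiset.replicate (q + 2 - r) 1 + L 2 (r - 2)
        + Multiset.replicate (m + 1 - r) r) := by
  intro i
  induction i with
  | zero => intro r _ _ _ h; simpa using h
  | succ i ih =>
    intro r h2 hq' hm' hend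
    have hnext := ih (r+1) (by omega) (by omega) (by omega)
      (hend.cast (by omega) (by rw [show r + (i+1) = r + 1 + i by omega]))
    -- now perform the round-r step
    have hsplit : Multiset.replicate (q + 2 - r) 1 + L 2 (r - 2)
          + Multiset.replicate (m + 1 - r) r
        = (Multiset.replicate (q + 1 - r) 1 + {r})
          + (({1} : Multiset ℕ) + L 2 (r - 2) + Multiset.replicate (m - r) r) := by
      rw [show q + 2 - r = (q + 1 - r) + 1 by omega, show m + 1 - r = (m - r) + 1 by omega,
        Multiset.replicate_succ, Multiset.replicate_succ, ← Multiset.singleton_add,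
        ← Multiset.singleton_add]
      ac_rfl
    rw [hsplit]
    refine Sched.stepA _ _ ?_ ?_ ?_
    · simp [Multiset.sum_replicate]; omega
    · intro h0
      rcases Multiset.mem_add.1 h0 with h | h
      · exact absurd (Multiset.eq_of_mem_replicate h) (by omega)
      · rw [Multiset.mem_singleton] at h; omega
    · refine hnext.cast (by omega) ?_
      have hc : Multiset.card (Multiset.replicate (q+1-r) 1 + {r}) - 1 = q + 1 - r := by
        simp [Multiset.card_replicate]
      rw [hc]
      rw [Multiset.map_add, Multiset.map_add, L_map, rep_map, Multiset.map_singleton]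
      -- ({2} + L 3 (r-2) + rep (m-r) (r+1)) + rep (q+1-r) 1
      --   = rep (q+2-(r+1)) 1 + L 2 (r+1-2) + rep (m+1-(r+1)) (r+1)
      have hL : ({2} : Multiset ℕ) + L 3 (r - 2) = L 2 (r - 1) := by
        rw [show r - 1 = (r - 2) + 1 by omega, L_bot, Multiset.singleton_add]
      rw [show q + 2 - (r+1) = q + 1 - r by omega, show r + 1 - 2 = r - 1 by omega,
        show m + 1 - (r+1) = m - r by omega, ← hL]
      ac_rfl
end Phases

section Assemble
variable {q t m : ℕ}

/-- The full schedule: from a single vertex and `q + m` outside vertices each with one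
free edge, Waiter reaches a component of size `min (m+q+1) (2*m)`. -/
lemma sched_main (hq : 1 ≤ q) (hm : 1 ≤ m) (ht1 : t ≤ m + q + 1) (ht2 : t ≤ 2 * m) :
    Sched q t 1 (Multiset.replicate (q + m) 1) := by
  -- state after round 1
  have h2 : Sched q t 2 (Multiset.replicate (q + 2 - 2) 1 + L 2 (2 - 2)
      + Multiset.replicate (m + 1 - 2) 2) := by
    rcases le_or_gt m q with hreg | hreg
    · -- regime 2 : m ≤ q
      refine bridge hm (m - 1) 2 (by omega) (by omega) (by omega) ?_
      have := phase_end2 (e := q + 1 - m) (q := q) (t := t) (m := m) (by omega) ht2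
        (m - 1) 0 (by omega)
      refine this.cast (by omega) ?_
      rw [show 2 + (m-1) - 2 = m - 1 by omega, show m + 1 - (2 + (m-1)) = 0 by omega,
        show q + 2 - (2 + (m - 1)) = q + 1 - m by omega, show (0:ℕ) + 2 = 2 by omega,
        Multiset.replicate_zero, add_zero]
    · -- regime 1 : q + 1 ≤ m
      refine bridge hm (q - 1) 2 (by omega) (by omega) (by omega) ?_
      have := phase3 (q := q) (t := t) (m := m) hq (by omega) ht1 (m - q) (q + 1)
        (by omega) (by omega)
      refine this.cast (by omega) ?_
      have hL1 : L 1 q = Multiset.replicate 1 1 + L 2 (q - 1) := by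
        rw [show q = (q - 1) + 1 by omega, L_bot, Multiset.replicate_one,
          ← Multiset.singleton_add, show (1:ℕ)+1 = 2 by omega,
          show q - 1 + 1 - 1 = q - 1 by omega]
      rw [show q + 1 - q = 1 by omega, hL1,
        show 2 + (q-1) - 2 = q - 1 by omega, show q + 2 - (2 + (q-1)) = 1 by omega,
        show m + 1 - (2 + (q-1)) = m - q by omega, show (2:ℕ) + (q-1) = q + 1 by omega]
  -- round 1
  have hsplit : Multiset.replicate (q + m) 1
      = Multiset.replicate (q + 1) 1 + Multiset.replicate (m - 1) 1 := by
    rw [← Multiset.replicate_add]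
    congr 1
    omega
  rw [hsplit]
  refine Sched.stepA _ _ ?_ ?_ ?_
  · simp [Multiset.sum_replicate]; omega
  · intro h0
    exact absurd (Multiset.eq_of_mem_replicate h0) (by omega)
  · refine h2.cast rfl ?_
    rw [Multiset.card_replicate, rep_map, show q + 1 - 1 = q by omega,
      show q + 2 - 2 = q by omega, show m + 1 - 2 = m - 1 by omega, L_zero,
      add_zero, add_comm]
end Assemble


open Finset in
lemma multiset_map_split {α β : Type*} {f : α → β} :
    ∀ {T : Multiset β} {s : Multiset α} {R : Multiset β}, s.map f = T + R →
      ∃ u w : Multiset α, s = u + w ∧ u.map f = T ∧ w.map f = R := by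
  intro T
  induction T using Multiset.induction with
  | empty => exact fun {s R} h => ⟨0, s, by simp, by simp, by simpa using h⟩
  | cons a T ih =>
    intro s R h
    rw [Multiset.cons_add] at h
    have ha : a ∈ s.map f := h ▸ Multiset.mem_cons_self a _
    obtain ⟨x, hxs, hfx⟩ := Multiset.mem_map.1 ha
    obtain ⟨s', rfl⟩ := Multiset.exists_cons_of_mem hxs
    rw [Multiset.map_cons, hfx] at h
    have h' : s'.map f = T + R := by
      exact (Multiset.cons_inj_right a).1 h
    obtain ⟨u, w, rfl, hu, hw⟩ := ih h'
    exact ⟨x ::ₘ u, w, by rw [Multiset.cons_add], by rw [Multiset.map_cons, hfx, hu], hw⟩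

variable (n q : ℕ)

/-- Waiter's invariant: Client's edges contain a connected set `A` of size `s`; every
vertex `u` outside `A` has exactly `f u` free edges into `A`, where the multiset of the
values `f u` is `D`; and all edges between two outside vertices are free. -/
def Realizes (F C : Finset (Sym2 (Fin n))) (s : ℕ) (D : Multiset ℕ) : Prop :=
  ∃ (A : Finset (Fin n)) (f : Fin n → ℕ) (v : Fin n),
    v ∈ A ∧ A.card = s ∧
    (∀ a ∈ A, (clientGraph C).Reachable v a) ∧
    D = Multiset.map f (Finset.univ \ A).val ∧
    (∀ u, u ∉ A → (A.filter (fun a => s(u, a) ∈ F)).card = f u) ∧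
    (∀ u w : Fin n, u ∉ A → w ∉ A → u ≠ w → s(u, w) ∈ F)

lemma moveA {F C : Finset (Sym2 (Fin n))} {s : ℕ} {T R : Multiset ℕ}
    (h : Realizes n F C s (T + R)) (hT : T.sum = q + 1) (h0 : (0:ℕ) ∉ T) :
    ∃ O ⊆ F, O.card = q + 1 ∧ ∀ x ∈ O,
      Realizes n (F \ O) (insert x C) (s + 1)
        (R.map (· + 1) + Multiset.replicate (Multiset.card T - 1) 1) := by
  obtain ⟨A, f, v, hv, hcard, hreach, hD, hfree, hout⟩ := h
  obtain ⟨tU, tW, hsplit, hmapU, hmapW⟩ := multiset_map_split hD.symm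
  have hnodup : (tU + tW).Nodup := hsplit ▸ (Finset.univ \ A).nodup
  have hdisj : Disjoint tU tW := (Multiset.nodup_add.1 hnodup).2.2
  have hUnodup : tU.Nodup := (Multiset.nodup_add.1 hnodup).1
  set U : Finset (Fin n) := ⟨tU, hUnodup⟩ with hU
  have hUsub : ∀ u ∈ U, u ∉ A := by
    intro u hu
    have hu' : u ∈ tU := hu
    have : u ∈ (Finset.univ \ A).val := by
      rw [hsplit]
      exact Multiset.mem_add.2 (Or.inl hu')
    exact (Finset.mem_sdiff.1 this).2
  have hUf : ∀ u ∈ U, f u ∈ T := by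
    intro u hu
    exact hmapU ▸ Multiset.mem_map_of_mem f hu
  have hUpos : ∀ u ∈ U, 1 ≤ f u := by
    intro u hu
    have := hUf u hu
    rcases Nat.eq_zero_or_pos (f u) with h | h
    · exact absurd (h ▸ this) h0
    · exact h
  classical
  set O : Finset (Sym2 (Fin n)) :=
    U.biUnion (fun u => (A.filter (fun a => s(u, a) ∈ F)).image (fun a => s(u, a))) with hO
  have hOmem : ∀ y, y ∈ O ↔ ∃ u ∈ U, ∃ a ∈ A, s(u, a) ∈ F ∧ y = s(u, a) := by
    intro y
    simp only [hO, Finset.mem_biUnion, Finset.mem_image, Finset.mem_filter]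
    constructor
    · rintro ⟨u, hu, a, ⟨ha, haF⟩, rfl⟩; exact ⟨u, hu, a, ha, haF, rfl⟩
    · rintro ⟨u, hu, a, ha, haF, rfl⟩; exact ⟨u, hu, a, ⟨ha, haF⟩, rfl⟩
  -- key: edges with both endpoints outside A are not in O
  have hOout : ∀ u w : Fin n, u ∉ A → w ∉ A → s(u, w) ∉ O := by
    intro u w hu hw hmem
    obtain ⟨u', hu', a, ha, _, heq⟩ := (hOmem _).1 hmem
    rcases Sym2.eq_iff.1 heq with ⟨_, rfl⟩ | ⟨rfl, _⟩
    · exact hw ha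
    · exact hu ha
  have hOsubF : O ⊆ F := by
    intro y hy
    obtain ⟨u, hu, a, ha, haF, rfl⟩ := (hOmem y).1 hy
    exact haF
  have hinj : ∀ u : Fin n, u ∉ A → Set.InjOn (fun a => s(u, a)) A := by
    intro u hu a ha b hb hab
    exact Sym2.congr_right.1 hab
  have hOcard : O.card = q + 1 := by
    rw [hO, Finset.card_biUnion]
    · have : ∀ u ∈ U, ((A.filter (fun a => s(u, a) ∈ F)).image (fun a => s(u, a))).card
          = f u := by
        intro u hu
        rw [Finset.card_image_of_injOn (Set.InjOn.mono (fun a ha =>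
          (Finset.mem_filter.1 ha).1) (hinj u (hUsub u hu)))]
        exact hfree u (hUsub u hu)
      rw [Finset.sum_congr rfl this]
      have : ∑ u ∈ U, f u = (tU.map f).sum := by
        rw [Finset.sum]
      rw [this, hmapU, hT]
    · intro u hu u' hu' huu'
      simp only [Finset.disjoint_left]
      intro y hy hy'
      obtain ⟨a, ha, rfl⟩ := Finset.mem_image.1 hy
      obtain ⟨a', ha', heq⟩ := Finset.mem_image.1 hy'
      rcases Sym2.eq_iff.1 heq with ⟨h1, h2⟩ | ⟨h1, h2⟩
      · exact huu' h1.symm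
      · have haA : a ∈ A := (Finset.mem_filter.1 ha).1
        exact hUsub u' hu' (h1 ▸ haA)
  refine ⟨O, hOsubF, hOcard, ?_⟩
  intro x hx
  obtain ⟨u₀, hu₀U, a₀, ha₀A, ha₀F, rfl⟩ := (hOmem x).1 hx
  have hu₀A : u₀ ∉ A := hUsub u₀ hu₀U
  refine ⟨insert u₀ A, fun w => if w ∈ U then 1 else f w + 1, v,
    Finset.mem_insert_of_mem hv, ?_, ?_, ?_, ?_, ?_⟩
  · rw [Finset.card_insert_of_notMem hu₀A, hcard]
  · intro a ha
    have hmono : clientGraph C ≤ clientGraph (insert (s(u₀, a₀)) C) := by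
      apply SimpleGraph.fromEdgeSet_mono
      intro e he
      exact Finset.mem_coe.2 (Finset.mem_insert_of_mem (Finset.mem_coe.1 he))
    rcases Finset.mem_insert.1 ha with rfl | haA
    · refine ((hreach a₀ ha₀A).mono hmono).trans (SimpleGraph.Adj.reachable ?_)
      rw [clientGraph, SimpleGraph.fromEdgeSet_adj]
      refine ⟨?_, fun h => hu₀A (h ▸ ha₀A)⟩
      rw [Sym2.eq_swap, Finset.mem_coe]
      exact Finset.mem_insert_self _ _
    · exact (hreach a haA).mono hmono
  · -- multiset identity
    have h1 : Finset.univ \ insert u₀ A = (Finset.univ \ A).erase u₀ := by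
      ext y
      simp only [Finset.mem_sdiff, Finset.mem_insert, Finset.mem_erase, Finset.mem_univ,
        true_and]
      tauto
    rw [h1, Finset.erase_val, hsplit]
    have hu₀tU : u₀ ∈ tU := hu₀U
    have hcardT : Multiset.card T = Multiset.card tU := by rw [← hmapU, Multiset.card_map]
    have hW : Multiset.map (fun w => if w ∈ U then 1 else f w + 1) tW = R.map (· + 1) := by
      rw [← hmapW, Multiset.map_map]
      apply Multiset.map_congr rfl
      intro y hy
      have hynU : y ∉ U := Multiset.disjoint_left.1 hdisj.symm hy
      simp only [Function.comp_apply, if_neg hynU]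
    have hUrep : Multiset.map (fun w => if w ∈ U then 1 else f w + 1) (tU.erase u₀)
        = Multiset.replicate (Multiset.card T - 1) 1 := by
      rw [Multiset.eq_replicate]
      constructor
      · rw [Multiset.card_map, Multiset.card_erase_of_mem hu₀tU, hcardT]
        rfl
      · intro b hb
        obtain ⟨y, hy, rfl⟩ := Multiset.mem_map.1 hb
        have hyU : y ∈ U := Multiset.mem_of_mem_erase hy
        simp only [if_pos hyU]
    rw [Multiset.erase_add_left_pos _ hu₀tU, Multiset.map_add, hW, hUrep, add_comm]
  · -- free degree counts
    intro w hw
    have hwu₀ : w ≠ u₀ := fun h => hw (h ▸ Finset.mem_insert_self u₀ A)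
    have hwA : w ∉ A := fun h => hw (Finset.mem_insert_of_mem h)
    rw [Finset.filter_insert]
    have hedge : s(w, u₀) ∈ F \ O :=
      Finset.mem_sdiff.2 ⟨hout w u₀ hwA hu₀A hwu₀, hOout w u₀ hwA hu₀A⟩
    rw [if_pos hedge,
      Finset.card_insert_of_notMem (fun hmem => hu₀A (Finset.mem_filter.1 hmem).1)]
    by_cases hwU : w ∈ U
    · simp only [if_pos hwU]
      have hempty : A.filter (fun a => s(w, a) ∈ F \ O) = ∅ := by
        apply Finset.filter_eq_empty_iff.2
        intro a haA hFO
        obtain ⟨hF, hNO⟩ := Finset.mem_sdiff.1 hFO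
        exact hNO ((hOmem _).2 ⟨w, hwU, a, haA, hF, rfl⟩)
      rw [hempty]
      simp
    · simp only [if_neg hwU]
      have hsame : A.filter (fun a => s(w, a) ∈ F \ O) = A.filter (fun a => s(w, a) ∈ F) := by
        apply Finset.filter_congr
        intro a haA
        simp only [Finset.mem_sdiff]
        constructor
        · exact fun h => h.1
        · intro hF
          refine ⟨hF, fun hO' => ?_⟩
          obtain ⟨u', hu', a', ha', _, heq⟩ := (hOmem _).1 hO'
          rcases Sym2.eq_iff.1 heq with ⟨h1, h2⟩ | ⟨h1, h2⟩
          · exact hwU (by rw [h1]; exact hu')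
          · exact hwA (by rw [h1]; exact ha')
      rw [hsame, hfree w hwA]
  · -- outside-outside edges stay free
    intro u w hu hw huw
    have huA : u ∉ A := fun h => hu (Finset.mem_insert_of_mem h)
    have hwA : w ∉ A := fun h => hw (Finset.mem_insert_of_mem h)
    exact Finset.mem_sdiff.2 ⟨hout u w huA hwA huw, hOout u w huA hwA⟩

lemma moveB {F C : Finset (Sym2 (Fin n))} {s : ℕ} {d : ℕ} {R : Multiset ℕ}
    (h : Realizes n F C s (d ::ₘ R)) (hd : q + 1 ≤ d) :
    ∃ O ⊆ F, O.card = q + 1 ∧ ∀ x ∈ O,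
      Realizes n (F \ O) (insert x C) (s + 1) (R.map (· + 1)) := by
  obtain ⟨A, f, v, hv, hcard, hreach, hD, hfree, hout⟩ := h
  have hD' : Multiset.map f (Finset.univ \ A).val = ({d} : Multiset ℕ) + R := by
    rw [← hD, Multiset.singleton_add]
  obtain ⟨tU, tW, hsplit, hmapU, hmapW⟩ := multiset_map_split hD'
  obtain ⟨u₀, rfl⟩ : ∃ u₀, tU = {u₀} := by
    rcases Multiset.card_eq_one.1 (by rw [← Multiset.card_map, hmapU]; rfl) with ⟨u₀, h⟩
    exact ⟨u₀, h⟩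
  have hfu₀ : f u₀ = d := by
    have h2 := hmapU
    rw [Multiset.map_singleton] at h2
    exact Multiset.singleton_inj.1 h2
  have hu₀A : u₀ ∉ A := by
    have : u₀ ∈ (Finset.univ \ A).val := by
      rw [hsplit]
      exact Multiset.mem_add.2 (Or.inl (Multiset.mem_singleton_self u₀))
    exact (Finset.mem_sdiff.1 this).2
  -- choose q+1 free edges from u₀ into A
  have hbig : q + 1 ≤ (A.filter (fun a => s(u₀, a) ∈ F)).card := by
    rw [hfree u₀ hu₀A, hfu₀]; exact hd
  obtain ⟨B, hBsub, hBcard⟩ := Finset.exists_subset_card_eq hbig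
  classical
  set O : Finset (Sym2 (Fin n)) := B.image (fun a => s(u₀, a)) with hO
  have hBA : ∀ a ∈ B, a ∈ A := fun a ha => (Finset.mem_filter.1 (hBsub ha)).1
  have hOmem : ∀ y, y ∈ O ↔ ∃ a ∈ B, y = s(u₀, a) := by
    intro y
    simp only [hO, Finset.mem_image]
    constructor
    · rintro ⟨a, ha, rfl⟩; exact ⟨a, ha, rfl⟩
    · rintro ⟨a, ha, rfl⟩; exact ⟨a, ha, rfl⟩
  have hOout : ∀ u w : Fin n, u ∉ A → w ∉ A → s(u, w) ∉ O := by
    intro u w hu hw hmem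
    obtain ⟨a, ha, heq⟩ := (hOmem _).1 hmem
    rcases Sym2.eq_iff.1 heq with ⟨h1, h2⟩ | ⟨h1, h2⟩
    · exact hw (by rw [h2]; exact hBA a ha)
    · exact hu (by rw [h1]; exact hBA a ha)
  have hOsubF : O ⊆ F := by
    intro y hy
    obtain ⟨a, ha, rfl⟩ := (hOmem y).1 hy
    exact (Finset.mem_filter.1 (hBsub ha)).2
  have hOcard : O.card = q + 1 := by
    rw [hO, Finset.card_image_of_injOn (fun a _ b _ hab => Sym2.congr_right.1 hab), hBcard]
  refine ⟨O, hOsubF, hOcard, ?_⟩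
  intro x hx
  obtain ⟨a₀, ha₀B, rfl⟩ := (hOmem x).1 hx
  have ha₀A : a₀ ∈ A := hBA a₀ ha₀B
  have ha₀F : s(u₀, a₀) ∈ F := (Finset.mem_filter.1 (hBsub ha₀B)).2
  refine ⟨insert u₀ A, fun w => f w + 1, v, Finset.mem_insert_of_mem hv, ?_, ?_, ?_, ?_, ?_⟩
  · rw [Finset.card_insert_of_notMem hu₀A, hcard]
  · intro a ha
    have hmono : clientGraph C ≤ clientGraph (insert (s(u₀, a₀)) C) := by
      apply SimpleGraph.fromEdgeSet_mono
      intro e he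
      exact Finset.mem_coe.2 (Finset.mem_insert_of_mem (Finset.mem_coe.1 he))
    rcases Finset.mem_insert.1 ha with rfl | haA
    · refine ((hreach a₀ ha₀A).mono hmono).trans (SimpleGraph.Adj.reachable ?_)
      rw [clientGraph, SimpleGraph.fromEdgeSet_adj]
      refine ⟨?_, fun h => hu₀A (h ▸ ha₀A)⟩
      rw [Sym2.eq_swap, Finset.mem_coe]
      exact Finset.mem_insert_self _ _
    · exact (hreach a haA).mono hmono
  · -- multiset
    have h1 : Finset.univ \ insert u₀ A = (Finset.univ \ A).erase u₀ := by
      ext y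
      simp only [Finset.mem_sdiff, Finset.mem_insert, Finset.mem_erase, Finset.mem_univ,
        true_and]
      tauto
    rw [h1, Finset.erase_val, hsplit]
    have : (({u₀} : Multiset (Fin n)) + tW).erase u₀ = tW := by
      rw [Multiset.singleton_add, Multiset.erase_cons_head]
    rw [this, ← hmapW, Multiset.map_map]
    rfl
  · -- free degrees
    intro w hw
    have hwu₀ : w ≠ u₀ := fun h => hw (h ▸ Finset.mem_insert_self u₀ A)
    have hwA : w ∉ A := fun h => hw (Finset.mem_insert_of_mem h)
    rw [Finset.filter_insert]
    have hedge : s(w, u₀) ∈ F \ O :=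
      Finset.mem_sdiff.2 ⟨hout w u₀ hwA hu₀A hwu₀, hOout w u₀ hwA hu₀A⟩
    rw [if_pos hedge,
      Finset.card_insert_of_notMem (fun hmem => hu₀A (Finset.mem_filter.1 hmem).1)]
    have hsame : A.filter (fun a => s(w, a) ∈ F \ O) = A.filter (fun a => s(w, a) ∈ F) := by
      apply Finset.filter_congr
      intro a haA
      simp only [Finset.mem_sdiff]
      constructor
      · exact fun h => h.1
      · intro hF
        refine ⟨hF, fun hO' => ?_⟩
        obtain ⟨a', ha', heq⟩ := (hOmem _).1 hO'
        rcases Sym2.eq_iff.1 heq with ⟨h1, h2⟩ | ⟨h1, h2⟩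
        · exact hwu₀ h1
        · exact hwA (by rw [h1]; exact hBA a' ha')
    rw [hsame, hfree w hwA]
  · intro u w hu hw huw
    have huA : u ∉ A := fun h => hu (Finset.mem_insert_of_mem h)
    have hwA : w ∉ A := fun h => hw (Finset.mem_insert_of_mem h)
    exact Finset.mem_sdiff.2 ⟨hout u w huA hwA huw, hOout u w huA hwA⟩


lemma master (n q : ℕ) (hq : 1 ≤ q) (hn : q + 2 ≤ n) :
    ∀ {s : ℕ} {D : Multiset ℕ},
      Sched q (min n (2 * (n - q - 1))) s D →
      ∀ F C : Finset (Sym2 (Fin n)), Realizes n F C s D →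
      WaiterCanForce q
        (fun C : Finset (Sym2 (Fin n)) => ∃ v : Fin n,
          min (n : ℤ) (2 * ((n : ℤ) - (q : ℤ) - 1)) ≤
            ((((clientGraph C).connectedComponentMk v).supp.ncard : ℤ)))
        F C := by
  intro s D hSched
  induction hSched with
  | @done s D h =>
    intro F C hReal
    obtain ⟨A, f, v, hv, hcard, hreach, _, _, _⟩ := hReal
    apply waiterCanForce_of_hereditary
    intro C' hC'
    refine ⟨v, ?_⟩
    have hAsupp : (↑A : Set (Fin n)) ⊆ ((clientGraph C').connectedComponentMk v).supp := by
      intro a ha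
      rw [SimpleGraph.ConnectedComponent.mem_supp_iff]
      apply SimpleGraph.ConnectedComponent.sound
      have hmono : clientGraph C ≤ clientGraph C' := by
        apply SimpleGraph.fromEdgeSet_mono
        exact_mod_cast hC'
      exact ((hreach a (by exact_mod_cast ha)).mono hmono).symm
    have h1 : (A.card : ℤ) ≤ (((clientGraph C').connectedComponentMk v).supp.ncard : ℤ) := by
      have h2 := Set.ncard_le_ncard hAsupp (Set.toFinite _)
      rw [Set.ncard_coe_finset] at h2
      exact_mod_cast h2
    refine le_trans ?_ h1
    rw [hcard]
    have hcast : min (n:ℤ) (2 * ((n:ℤ) - q - 1)) = ((min n (2*(n-q-1)) : ℕ) : ℤ) := by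
      rw [Nat.cast_min]
      congr 1
      omega
    rw [hcast]
    exact_mod_cast h
  | @stepA s T R hsum h0 hnext ih =>
    intro F C hReal
    obtain ⟨O, hOF, hOcard, hO⟩ := moveA n q hReal hsum h0
    rw [WaiterCanForce]
    have hge : ¬ F.card < q + 1 := by
      have := Finset.card_le_card hOF
      omega
    rw [if_neg hge]
    exact ⟨O, hOF, hOcard, fun x hx _ => ih (F \ O) (insert x C) (hO x hx)⟩
  | @stepB s d R hd hnext ih =>
    intro F C hReal
    obtain ⟨O, hOF, hOcard, hO⟩ := moveB n q hReal hd
    rw [WaiterCanForce]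
    have hge : ¬ F.card < q + 1 := by
      have := Finset.card_le_card hOF
      omega
    rw [if_neg hge]
    exact ⟨O, hOF, hOcard, fun x hx _ => ih (F \ O) (insert x C) (hO x hx)⟩

/-- For all positive integers `n` and `q`, in the `(q : 1)` Waiter-Client
game on `E(K_n)` Waiter has a strategy ensuring that Client's final graph contains a
connected component with at least `min {n, 2(n - q - 1)}` vertices. -/
theorem statement9 (n q : ℕ) (hn : 0 < n) (hq : 0 < q) :
    WaiterCanForce q
      (fun C : Finset (Sym2 (Fin n)) => ∃ v : Fin n,
        min (n : ℤ) (2 * ((n : ℤ) - (q : ℤ) - 1)) ≤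
          ((((clientGraph C).connectedComponentMk v).supp.ncard : ℤ)))
      (knBoard n) ∅ := by
  rcases le_or_gt n (q+1) with hsmall | hbig
  · -- trivial regime : the required bound is nonpositive
    apply waiterCanForce_of_hereditary
    intro C' _
    refine ⟨⟨0, hn⟩, le_trans (min_le_right _ _) ?_⟩
    have h1 : (n:ℤ) ≤ (q:ℤ) + 1 := by exact_mod_cast hsmall
    have h2 : (2 * ((n:ℤ) - q - 1)) ≤ 0 := by linarith
    exact le_trans h2 (Int.natCast_nonneg _)
  · -- main regime
    have hn2 : q + 2 ≤ n := hbig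
    apply master n q hq hn2 (s := 1) (D := Multiset.replicate (n-1) 1)
    · -- the schedule
      refine (sched_main (m := n - q - 1) hq (by omega) ?_ ?_).cast rfl ?_
      · have : (n - q - 1) + q + 1 = n := by omega
        rw [this]
        exact min_le_left _ _
      · exact min_le_right _ _
      · congr 1
        omega
    · -- initial position realizes the initial abstract state
      refine ⟨{⟨0, hn⟩}, fun _ => 1, ⟨0, hn⟩, Finset.mem_singleton_self _, Finset.card_singleton _,
        ?_, ?_, ?_, ?_⟩
      · intro a ha
        rw [Finset.mem_singleton] at ha
        rw [ha]
      · symm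
        rw [Multiset.eq_replicate]
        constructor
        · rw [Multiset.card_map]
          have : (Finset.univ \ {(⟨0, hn⟩ : Fin n)}).card = n - 1 := by
            rw [Finset.card_sdiff_of_subset (Finset.subset_univ _), Finset.card_singleton,
              Finset.card_univ, Fintype.card_fin]
          exact_mod_cast this
        · intro b hb
          obtain ⟨y, _, rfl⟩ := Multiset.mem_map.1 hb
          rfl
      · intro u hu
        rw [Finset.notMem_singleton] at hu
        rw [Finset.filter_singleton, if_pos, Finset.card_singleton]
        rw [knBoard, Finset.mem_filter]
        exact ⟨Finset.mem_univ _, by rw [Sym2.mk_isDiag_iff]; exact hu⟩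
      · intro u w hu hw huw
        rw [knBoard, Finset.mem_filter]
        exact ⟨Finset.mem_univ _, by rw [Sym2.mk_isDiag_iff]; exact huw⟩
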